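/- (Convergence of RSD, nonconvex case.) Let A ∈ ℝ^{m×n}, b ∈ ℝ^m, x^0 with A x^0 = b, M ∈ ℝ^{n×n} symmetric positive semidefinite and positive definite on ker(A), and f : ℝ^n → ℝ differentiable with f(y) ≤ f(x) + ⟨∇f(x), y−x⟩ + ½(y−x)^T M(y−x) for all x, y ∈ x^0 + ker(A), and bounded below on x^0 + ker(A) by f̄ > −∞. Let S^0, S^1, … be i.i.d. samples from a finite distribution over sketch matrices S_1, …, S_N with probabilities P_i, such that Z = Σ_i P_i Z_{S_i} is positive definite on ker(A), and let x^{k+1} = x^k − Z_{S^k} ∇f(x^k). Then for every k ≥ 1, min_{0 ≤ l ≤ k−1} E[ (∇f(x^l)_⊥)^T Z (∇f(x^l)_⊥) ] ≤ 2 (f(x^0) − f̄)/k, where ∇f(x)_⊥ denotes the orthogonal projection of ∇f(x) onto ker(A) and the expectation is over the random samples S^0, …, S^{l−1}. -/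

import Mathlib

open Matrix

-- The Moore–Penrose pseudoinverse of a real matrix, defined via the four
-- Penrose conditions (which have a unique solution for every real matrix).
open Classical in
noncomputable def mpinv {k l : Type*} [Fintype k] [Fintype l] (B : Matrix k l ℝ) :
    Matrix l k ℝ :=
  if h : ∃ X : Matrix l k ℝ,
      B * X * B = B ∧ X * B * X = X ∧ (B * X)ᵀ = B * X ∧ (X * B)ᵀ = X * B
  then h.choose else 0

/-- `P_S = I - (AS)†(AS)`, the orthogonal projection onto `ker(AS)`. -/
noncomputable def Pmat {m n p : ℕ} (A : Matrix (Fin m) (Fin n) ℝ)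
    (S : Matrix (Fin n) (Fin p) ℝ) : Matrix (Fin p) (Fin p) ℝ :=
  1 - mpinv (A * S) * (A * S)

/-- `Z_S = S P_S (P_Sᵀ Sᵀ M S P_S)† P_Sᵀ Sᵀ`. -/
noncomputable def Zmat {m n p : ℕ} (A : Matrix (Fin m) (Fin n) ℝ)
    (M : Matrix (Fin n) (Fin n) ℝ) (S : Matrix (Fin n) (Fin p) ℝ) :
    Matrix (Fin n) (Fin n) ℝ :=
  S * Pmat A S * mpinv ((Pmat A S)ᵀ * Sᵀ * M * S * Pmat A S) * (Pmat A S)ᵀ * Sᵀ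

/-- The gradient of `f : ℝ^n → ℝ`, as a vector of partial derivatives. -/
noncomputable def gradv {n : ℕ} (f : (Fin n → ℝ) → ℝ) (x : Fin n → ℝ) : Fin n → ℝ :=
  fun i => fderiv ℝ f x (Pi.single i 1)

lemma herm_pinv_exists {q : Type*} [Fintype q] [DecidableEq q] (H : Matrix q q ℝ)
    (hH : H.IsHermitian) :
    ∃ Y : Matrix q q ℝ, H * Y * H = H ∧ Y * H * Y = Y ∧ (H * Y)ᵀ = H * Y ∧
      (Y * H)ᵀ = Y * H ∧ Yᵀ = Y := by
  set U : Matrix q q ℝ := (hH.eigenvectorUnitary : Matrix q q ℝ) with hUdef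
  set d : q → ℝ := hH.eigenvalues with hddef
  have hU1 : U * Uᵀ = 1 := by
    have h : U * star U = 1 := (Matrix.mem_unitaryGroup_iff).mp hH.eigenvectorUnitary.2
    rw [← Matrix.conjTranspose_eq_transpose_of_trivial, ← Matrix.star_eq_conjTranspose]; exact h
  have hU2 : Uᵀ * U = 1 := by
    have h : star U * U = 1 := (Matrix.mem_unitaryGroup_iff').mp hH.eigenvectorUnitary.2
    rw [← Matrix.conjTranspose_eq_transpose_of_trivial, ← Matrix.star_eq_conjTranspose]; exact h
  have hspec : H = U * diagonal d * Uᵀ := by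
    have h := hH.spectral_theorem
    rw [← Matrix.conjTranspose_eq_transpose_of_trivial, ← Matrix.star_eq_conjTranspose]
    simpa [RCLike.ofReal_real_eq_id, Function.comp] using h
  set D : Matrix q q ℝ := diagonal d
  set D' : Matrix q q ℝ := diagonal (fun i => (d i)⁻¹)
  have hDD'D : D * D' * D = D := by
    simp only [D, D', diagonal_mul_diagonal]
    refine congrArg Matrix.diagonal (funext fun i => ?_)
    rcases eq_or_ne (d i) 0 with h | h
    · simp [h]
    · field_simp
  have hD'DD' : D' * D * D' = D' := by
    simp only [D, D', diagonal_mul_diagonal]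
    refine congrArg Matrix.diagonal (funext fun i => ?_)
    rcases eq_or_ne (d i) 0 with h | h
    · simp [h]
    · field_simp
  have hcomm : D * D' = D' * D := by
    simp only [D, D', diagonal_mul_diagonal, mul_comm]
  refine ⟨U * D' * Uᵀ, ?_, ?_, ?_, ?_, ?_⟩
  · rw [hspec]
    have : U * D * Uᵀ * (U * D' * Uᵀ) * (U * D * Uᵀ) = U * (D * (Uᵀ * U) * D' * (Uᵀ * U) * D) * Uᵀ := by
      noncomm_ring
    rw [this, hU2, mul_one, mul_one, hDD'D]
  · have : U * D' * Uᵀ * (U * D * Uᵀ) * (U * D' * Uᵀ) = U * (D' * (Uᵀ * U) * D * (Uᵀ * U) * D') * Uᵀ := by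
      noncomm_ring
    rw [hspec, this, hU2, mul_one, mul_one, hD'DD']
  · rw [hspec]
    have h1 : U * D * Uᵀ * (U * D' * Uᵀ) = U * (D * (Uᵀ * U) * D') * Uᵀ := by noncomm_ring
    rw [h1, hU2, mul_one]
    rw [transpose_mul, transpose_mul, transpose_transpose]
    have : (D * D')ᵀ = D * D' := by
      simp only [D, D', diagonal_mul_diagonal, diagonal_transpose]
    rw [this]; noncomm_ring
  · rw [hspec]
    have h1 : U * D' * Uᵀ * (U * D * Uᵀ) = U * (D' * (Uᵀ * U) * D) * Uᵀ := by noncomm_ring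
    rw [h1, hU2, mul_one]
    rw [transpose_mul, transpose_mul, transpose_transpose]
    have : (D' * D)ᵀ = D' * D := by
      simp only [D, D', diagonal_mul_diagonal, diagonal_transpose]
    rw [this]; noncomm_ring
  · rw [transpose_mul, transpose_mul, transpose_transpose]
    have : D'ᵀ = D' := by simp [D', diagonal_transpose]
    rw [this]; noncomm_ring

lemma pinv_exists {k l : Type*} [Fintype k] [Fintype l] (B : Matrix k l ℝ) :
    ∃ X : Matrix l k ℝ,
      B * X * B = B ∧ X * B * X = X ∧ (B * X)ᵀ = B * X ∧ (X * B)ᵀ = X * B := by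
  classical
  have hherm : (Bᵀ * B).IsHermitian := by
    show (Bᵀ * B)ᴴ = Bᵀ * B
    rw [Matrix.conjTranspose_eq_transpose_of_trivial, transpose_mul, transpose_transpose]
  obtain ⟨Y, h1, h2, h3, h4, h5⟩ := herm_pinv_exists (Bᵀ * B) hherm
  have hkey : B * (Y * (Bᵀ * B)) = B := by
    have hH0 : (Bᵀ * B) * (Y * (Bᵀ * B) - 1) = 0 := by
      rw [Matrix.mul_sub, Matrix.mul_one, ← Matrix.mul_assoc, h1, sub_self]
    have hCC : (B * (Y * (Bᵀ * B) - 1))ᵀ * (B * (Y * (Bᵀ * B) - 1)) = 0 := by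
      rw [transpose_mul, Matrix.mul_assoc, ← Matrix.mul_assoc Bᵀ B _, hH0, Matrix.mul_zero]
    have hC0 : B * (Y * (Bᵀ * B) - 1) = 0 := by
      rw [← Matrix.conjTranspose_eq_transpose_of_trivial] at hCC
      exact Matrix.conjTranspose_mul_self_eq_zero.mp hCC
    have h6 : B * (Y * (Bᵀ * B)) - B = B * (Y * (Bᵀ * B) - 1) := by
      rw [Matrix.mul_sub, Matrix.mul_one]
    rw [hC0] at h6
    exact sub_eq_zero.mp h6
  refine ⟨Y * Bᵀ, ?_, ?_, ?_, ?_⟩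
  · have e : B * (Y * Bᵀ) * B = B * (Y * (Bᵀ * B)) := by simp only [Matrix.mul_assoc]
    rw [e, hkey]
  · have e : Y * Bᵀ * B * (Y * Bᵀ) = (Y * (Bᵀ * B) * Y) * Bᵀ := by
      simp only [Matrix.mul_assoc]
    rw [e, h2]
  · have e : B * (Y * Bᵀ) = B * Y * Bᵀ := by simp only [Matrix.mul_assoc]
    rw [e, transpose_mul, transpose_mul, transpose_transpose, h5]
    simp only [Matrix.mul_assoc]
  · have e : Y * Bᵀ * B = Y * (Bᵀ * B) := by simp only [Matrix.mul_assoc]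
    rw [e, h4]

lemma mpinv_spec {k l : Type*} [Fintype k] [Fintype l] (B : Matrix k l ℝ) :
    B * mpinv B * B = B ∧ mpinv B * B * mpinv B = mpinv B ∧
      (B * mpinv B)ᵀ = B * mpinv B ∧ (mpinv B * B)ᵀ = mpinv B * B := by
  classical
  rw [mpinv, dif_pos (pinv_exists B)]
  exact (pinv_exists B).choose_spec

lemma mpinv_unique {k l : Type*} [Fintype k] [Fintype l] (B : Matrix k l ℝ)
    (X : Matrix l k ℝ) (h1 : B * X * B = B) (h2 : X * B * X = X)
    (h3 : (B * X)ᵀ = B * X) (h4 : (X * B)ᵀ = X * B) : X = mpinv B := by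
  obtain ⟨g1, g2, g3, g4⟩ := mpinv_spec B
  have hBX : B * X = B * mpinv B := by
    calc B * X = (B * X)ᵀ := h3.symm
      _ = Xᵀ * Bᵀ := transpose_mul _ _
      _ = Xᵀ * (B * mpinv B * B)ᵀ := by rw [g1]
      _ = Xᵀ * (Bᵀ * (B * mpinv B)ᵀ) := by rw [transpose_mul]
      _ = (Xᵀ * Bᵀ) * (B * mpinv B)ᵀ := by simp only [Matrix.mul_assoc]
      _ = (B * X)ᵀ * (B * mpinv B)ᵀ := by rw [transpose_mul B X]
      _ = (B * X) * (B * mpinv B) := by rw [h3, g3]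
      _ = (B * X * B) * mpinv B := by simp only [Matrix.mul_assoc]
      _ = B * mpinv B := by rw [h1]
  have hXB : X * B = mpinv B * B := by
    calc X * B = (X * B)ᵀ := h4.symm
      _ = Bᵀ * Xᵀ := transpose_mul _ _
      _ = (B * (mpinv B * B))ᵀ * Xᵀ := by rw [← Matrix.mul_assoc, g1]
      _ = ((mpinv B * B)ᵀ * Bᵀ) * Xᵀ := by rw [transpose_mul]
      _ = (mpinv B * B)ᵀ * (Bᵀ * Xᵀ) := by simp only [Matrix.mul_assoc]
      _ = (mpinv B * B)ᵀ * (X * B)ᵀ := by rw [transpose_mul X B]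
      _ = (mpinv B * B) * (X * B) := by rw [h4, g4]
      _ = mpinv B * (B * X * B) := by simp only [Matrix.mul_assoc]
      _ = mpinv B * B := by rw [h1]
  calc X = X * B * X := h2.symm
    _ = (mpinv B * B) * X := by rw [hXB]
    _ = mpinv B * (B * X) := by simp only [Matrix.mul_assoc]
    _ = mpinv B * (B * mpinv B) := by rw [hBX]
    _ = mpinv B * B * mpinv B := by simp only [Matrix.mul_assoc]
    _ = mpinv B := g2

lemma mpinv_transpose_symm {q : Type*} [Fintype q] (W : Matrix q q ℝ) (hW : Wᵀ = W) :
    (mpinv W)ᵀ = mpinv W := by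
  obtain ⟨g1, g2, g3, g4⟩ := mpinv_spec W
  have c1 : W * (mpinv W)ᵀ * W = W := by
    have e : W * (mpinv W)ᵀ * W = (Wᵀ * mpinv W * Wᵀ)ᵀ := by
      rw [transpose_mul, transpose_mul, transpose_transpose]
      simp only [Matrix.mul_assoc]
    rw [e, hW, g1, hW]
  have c2 : (mpinv W)ᵀ * W * (mpinv W)ᵀ = (mpinv W)ᵀ := by
    have e : (mpinv W)ᵀ * W * (mpinv W)ᵀ = (mpinv W * Wᵀ * mpinv W)ᵀ := by
      rw [transpose_mul, transpose_mul, transpose_transpose]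
      simp only [Matrix.mul_assoc]
    rw [e, hW, g2]
  have c3 : (W * (mpinv W)ᵀ)ᵀ = W * (mpinv W)ᵀ := by
    have e1 : (W * (mpinv W)ᵀ)ᵀ = mpinv W * Wᵀ := by
      rw [transpose_mul, transpose_transpose]
    have e2 : W * (mpinv W)ᵀ = (mpinv W * W)ᵀᵀᵀ := by
      rw [transpose_transpose, transpose_mul, hW]
    rw [e1, e2, transpose_transpose, g4, hW]
  have c4 : ((mpinv W)ᵀ * W)ᵀ = (mpinv W)ᵀ * W := by
    have e1 : ((mpinv W)ᵀ * W)ᵀ = Wᵀ * mpinv W := by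
      rw [transpose_mul, transpose_transpose]
    have e2 : (mpinv W)ᵀ * W = (Wᵀ * mpinv W)ᵀ := by
      rw [transpose_mul, transpose_transpose]
    rw [e1, e2, hW, g3]
  exact (mpinv_unique W ((mpinv W)ᵀ) c1 c2 c3 c4)

lemma zmat_props {m n p : ℕ} (A : Matrix (Fin m) (Fin n) ℝ)
    (M : Matrix (Fin n) (Fin n) ℝ) (hMt : Mᵀ = M) (S : Matrix (Fin n) (Fin p) ℝ) :
    A * Zmat A M S = 0 ∧ Zmat A M S * Aᵀ = 0 ∧
      (Zmat A M S)ᵀ * M * Zmat A M S = Zmat A M S := by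
  obtain ⟨b1, b2, b3, b4⟩ := mpinv_spec (A * S)
  set P : Matrix (Fin p) (Fin p) ℝ := Pmat A S with hPdef
  have hPt : Pᵀ = P := by
    rw [hPdef, Pmat, transpose_sub, transpose_one, b4]
  have hBP : (A * S) * P = 0 := by
    rw [hPdef, Pmat, Matrix.mul_sub, Matrix.mul_one, ← Matrix.mul_assoc, b1, sub_self]
  set W : Matrix (Fin p) (Fin p) ℝ := Pᵀ * Sᵀ * M * S * P with hWdef
  have hWt : Wᵀ = W := by
    rw [hWdef]
    simp only [transpose_mul, transpose_transpose, hMt, hPt]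
    simp only [Matrix.mul_assoc]
  obtain ⟨w1, w2, w3, w4⟩ := mpinv_spec W
  have hGt : (mpinv W)ᵀ = mpinv W := mpinv_transpose_symm W hWt
  have hZdef : Zmat A M S = S * P * mpinv W * Pᵀ * Sᵀ := by
    rw [Zmat, ← hPdef, ← hWdef]
  refine ⟨?_, ?_, ?_⟩
  · rw [hZdef]
    have e : A * (S * P * mpinv W * Pᵀ * Sᵀ) = ((A * S) * P) * (mpinv W * Pᵀ * Sᵀ) := by
      simp only [Matrix.mul_assoc]
    rw [e, hBP, Matrix.zero_mul]
  · rw [hZdef]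
    have hPSA : Pᵀ * (Sᵀ * Aᵀ) = ((A * S) * P)ᵀ := by
      rw [transpose_mul, transpose_mul]
    have e : S * P * mpinv W * Pᵀ * Sᵀ * Aᵀ = (S * P * mpinv W) * (Pᵀ * (Sᵀ * Aᵀ)) := by
      simp only [Matrix.mul_assoc]
    rw [e, hPSA, hBP, transpose_zero, Matrix.mul_zero]
  · rw [hZdef]
    have hZt : (S * P * mpinv W * Pᵀ * Sᵀ)ᵀ = S * P * mpinv W * Pᵀ * Sᵀ := by
      simp only [transpose_mul, transpose_transpose, hPt, hGt]
      simp only [Matrix.mul_assoc]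
    rw [hZt]
    have e : S * P * mpinv W * Pᵀ * Sᵀ * M * (S * P * mpinv W * Pᵀ * Sᵀ) =
        (S * P) * (mpinv W * (Pᵀ * Sᵀ * M * S * P) * mpinv W) * (Pᵀ * Sᵀ) := by
      simp only [Matrix.mul_assoc]
    rw [e, ← hWdef, w2]
    simp only [Matrix.mul_assoc]

lemma dot_sum {n' : Type*} [Fintype n'] {ι : Type*} (s : Finset ι) (v : n' → ℝ)
    (w : ι → n' → ℝ) : v ⬝ᵥ (∑ i ∈ s, w i) = ∑ i ∈ s, v ⬝ᵥ w i := by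
  simp only [dotProduct, Finset.sum_apply, Finset.mul_sum]
  exact Finset.sum_comm

lemma quad_sum {n N : ℕ} (P : Fin N → ℝ) (Zs : Fin N → Matrix (Fin n) (Fin n) ℝ)
    (v : Fin n → ℝ) :
    v ⬝ᵥ (∑ i, P i • Zs i) *ᵥ v = ∑ i, P i * (v ⬝ᵥ (Zs i) *ᵥ v) := by
  have h1 : (∑ i, P i • Zs i) *ᵥ v = ∑ i, (P i • Zs i) *ᵥ v := by
    have h := map_sum (Matrix.mulVec.addMonoidHomLeft (α := ℝ) v)
      (fun i => P i • Zs i) Finset.univ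
    exact Matrix.sum_mulVec _ _ _
  rw [h1, dot_sum]
  refine Finset.sum_congr rfl fun i _ => ?_
  rw [Matrix.smul_mulVec, dotProduct_smul, smul_eq_mul]

lemma descent_step {m n : ℕ} (A : Matrix (Fin m) (Fin n) ℝ) (b : Fin m → ℝ)
    (M : Matrix (Fin n) (Fin n) ℝ)
    (f : (Fin n → ℝ) → ℝ)
    (hsmooth : ∀ x y : Fin n → ℝ, A.mulVec x = b → A.mulVec y = b →
      f y ≤ f x + gradv f x ⬝ᵥ (y - x) + (1 / 2) * ((y - x) ⬝ᵥ M.mulVec (y - x)))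
    (ZS : Matrix (Fin n) (Fin n) ℝ) (hAZ : A * ZS = 0) (hZMZ : ZSᵀ * M * ZS = ZS)
    (x : Fin n → ℝ) (hx : A.mulVec x = b) :
    A.mulVec (x - ZS.mulVec (gradv f x)) = b ∧
    f (x - ZS.mulVec (gradv f x)) ≤
      f x - (1/2) * (gradv f x ⬝ᵥ ZS.mulVec (gradv f x)) := by
  set g : Fin n → ℝ := gradv f x with hg
  have hfeas : A.mulVec (x - ZS.mulVec g) = b := by
    rw [Matrix.mulVec_sub, hx, Matrix.mulVec_mulVec, hAZ, Matrix.zero_mulVec, sub_zero]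
  refine ⟨hfeas, ?_⟩
  have h := hsmooth x (x - ZS.mulVec g) hx hfeas
  have hyx : (x - ZS.mulVec g) - x = -(ZS.mulVec g) := by abel
  rw [hyx] at h
  have e1 : g ⬝ᵥ -(ZS *ᵥ g) = -(g ⬝ᵥ ZS *ᵥ g) := dotProduct_neg _ _
  have e2 : -(ZS *ᵥ g) ⬝ᵥ M *ᵥ -(ZS *ᵥ g) = g ⬝ᵥ ZS *ᵥ g := by
    rw [Matrix.mulVec_neg, neg_dotProduct, dotProduct_neg, neg_neg]
    calc (ZS *ᵥ g) ⬝ᵥ M *ᵥ (ZS *ᵥ g)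
        = (g ᵥ* ZSᵀ) ⬝ᵥ (M * ZS) *ᵥ g := by
          rw [Matrix.vecMul_transpose, Matrix.mulVec_mulVec]
      _ = g ⬝ᵥ ZSᵀ *ᵥ ((M * ZS) *ᵥ g) := (Matrix.dotProduct_mulVec g ZSᵀ _).symm
      _ = g ⬝ᵥ (ZSᵀ * (M * ZS)) *ᵥ g := by rw [Matrix.mulVec_mulVec]
      _ = g ⬝ᵥ ZS *ᵥ g := by rw [← Matrix.mul_assoc, hZMZ]
  rw [e1, e2] at h
  linarith

lemma proj_quad {m n : ℕ} (A : Matrix (Fin m) (Fin n) ℝ) (Z : Matrix (Fin n) (Fin n) ℝ)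
    (hAZ : A * Z = 0) (hZA : Z * Aᵀ = 0) (v pv : Fin n → ℝ) (hpv : A.mulVec pv = 0)
    (y : Fin m → ℝ) (hy : Aᵀ.mulVec y = v - pv) :
    v ⬝ᵥ Z.mulVec v = pv ⬝ᵥ Z.mulVec pv := by
  have hv : v = pv + Aᵀ *ᵥ y := by rw [hy]; abel
  have hZu : Z *ᵥ (Aᵀ *ᵥ y) = 0 := by
    rw [Matrix.mulVec_mulVec, hZA, Matrix.zero_mulVec]
  have hu_dot : ∀ w : Fin n → ℝ, (Aᵀ *ᵥ y) ⬝ᵥ Z *ᵥ w = 0 := by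
    intro w
    rw [Matrix.mulVec_transpose, ← Matrix.dotProduct_mulVec, Matrix.mulVec_mulVec, hAZ,
      Matrix.zero_mulVec, dotProduct_zero]
  calc v ⬝ᵥ Z *ᵥ v = (pv + Aᵀ *ᵥ y) ⬝ᵥ Z *ᵥ (pv + Aᵀ *ᵥ y) := by rw [← hv]
    _ = (pv ⬝ᵥ Z *ᵥ pv + pv ⬝ᵥ Z *ᵥ (Aᵀ *ᵥ y)) +
        ((Aᵀ *ᵥ y) ⬝ᵥ Z *ᵥ pv + (Aᵀ *ᵥ y) ⬝ᵥ Z *ᵥ (Aᵀ *ᵥ y)) := by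
      rw [Matrix.mulVec_add, add_dotProduct, dotProduct_add, dotProduct_add]
    _ = pv ⬝ᵥ Z *ᵥ pv := by
      rw [hZu, dotProduct_zero, dotProduct_zero, hu_dot]
      ring

/-- sublinear convergence of RSD in the smooth (possibly nonconvex) case:
`min_{0 ≤ l ≤ k−1} E[‖∇f(x^l)_⊥‖_Z²] ≤ 2(f(x⁰) − f̄)/k`. -/
theorem stmt8 {m n N : ℕ} (A : Matrix (Fin m) (Fin n) ℝ) (b : Fin m → ℝ)
    (x0 : Fin n → ℝ) (hx0 : A.mulVec x0 = b)
    (M : Matrix (Fin n) (Fin n) ℝ) (hM : M.PosSemidef)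
    (hMpd : ∀ u : Fin n → ℝ, A.mulVec u = 0 → u ≠ 0 → 0 < u ⬝ᵥ M.mulVec u)
    (f : (Fin n → ℝ) → ℝ) (hdiff : Differentiable ℝ f)
    (hsmooth : ∀ x y : Fin n → ℝ, A.mulVec x = b → A.mulVec y = b →
      f y ≤ f x + gradv f x ⬝ᵥ (y - x) + (1 / 2) * ((y - x) ⬝ᵥ M.mulVec (y - x)))
    (fbar : ℝ) (hbd : ∀ x : Fin n → ℝ, A.mulVec x = b → fbar ≤ f x)
    (p : Fin N → ℕ) (S : ∀ i : Fin N, Matrix (Fin n) (Fin (p i)) ℝ)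
    (P : Fin N → ℝ) (hP : ∀ i, 0 ≤ P i) (hPsum : ∑ i, P i = 1)
    (Z : Matrix (Fin n) (Fin n) ℝ) (hZ : Z = ∑ i, P i • Zmat A M (S i))
    (hpd : ∀ u : Fin n → ℝ, A.mulVec u = 0 → u ≠ 0 → 0 < u ⬝ᵥ Z.mulVec u)
    -- the RSD iterates, indexed by the history of i.i.d. sketch samples
    (X : ∀ k : ℕ, (Fin k → Fin N) → (Fin n → ℝ))
    (hX0 : ∀ ω : Fin 0 → Fin N, X 0 ω = x0)
    (hXstep : ∀ (k : ℕ) (ω : Fin (k + 1) → Fin N),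
      X (k + 1) ω = X k (fun j => ω j.castSucc) -
        (Zmat A M (S (ω (Fin.last k)))).mulVec (gradv f (X k (fun j => ω j.castSucc))))
    -- `proj v` is the orthogonal projection of `v` onto `ker(A)`
    (proj : (Fin n → ℝ) → (Fin n → ℝ))
    (hproj : ∀ v : Fin n → ℝ, A.mulVec (proj v) = 0 ∧
      ∃ y : Fin m → ℝ, Aᵀ.mulVec y = v - proj v)
    (k : ℕ) (hk : 1 ≤ k) :
    ∃ l : ℕ, l < k ∧
      (∑ ω : Fin l → Fin N, (∏ j, P (ω j)) *
          (proj (gradv f (X l ω)) ⬝ᵥ Z.mulVec (proj (gradv f (X l ω))))) ≤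
        2 * (f x0 - fbar) / k := by
  classical
  have hMt : Mᵀ = M := by
    have h : Mᴴ = M := hM.1
    rwa [Matrix.conjTranspose_eq_transpose_of_trivial] at h
  have hZp := fun i : Fin N => zmat_props A M hMt (S i)
  have hAZ : A * Z = 0 := by
    rw [hZ, Matrix.mul_sum]
    exact Finset.sum_eq_zero fun i _ => by rw [Matrix.mul_smul, (hZp i).1, smul_zero]
  have hZA : Z * Aᵀ = 0 := by
    rw [hZ, Matrix.sum_mul]
    exact Finset.sum_eq_zero fun i _ => by rw [Matrix.smul_mul, (hZp i).2.1, smul_zero]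
  have hfeas : ∀ l (ω : Fin l → Fin N), A.mulVec (X l ω) = b := by
    intro l
    induction l with
    | zero => intro ω; rw [hX0]; exact hx0
    | succ l ih =>
      intro ω
      rw [hXstep l ω, Matrix.mulVec_sub, ih, Matrix.mulVec_mulVec, (hZp _).1,
        Matrix.zero_mulVec, sub_zero]
  have hwt_nonneg : ∀ {l : ℕ} (ω : Fin l → Fin N), 0 ≤ ∏ j, P (ω j) :=
    fun ω => Finset.prod_nonneg fun j _ => hP _
  have hsum_snoc : ∀ (l : ℕ) (F : (Fin (l+1) → Fin N) → ℝ),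
      ∑ ω : Fin (l+1) → Fin N, F ω = ∑ i : Fin N, ∑ ω : Fin l → Fin N, F (Fin.snoc ω i : Fin (l+1) → Fin N) := by
    intro l F
    rw [← Equiv.sum_comp (Fin.snocEquiv (fun _ => Fin N)) F, Fintype.sum_prod_type]
    rfl
  have hprod_snoc : ∀ (l : ℕ) (ω : Fin l → Fin N) (i : Fin N),
      (∏ j, P ((Fin.snoc ω i : Fin (l+1) → Fin N) j)) = (∏ j, P (ω j)) * P i := by
    intro l ω i
    rw [Fin.prod_univ_castSucc]
    simp [Fin.snoc_castSucc, Fin.snoc_last]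
  have hwt_one : ∀ l : ℕ, (∑ ω : Fin l → Fin N, ∏ j, P (ω j)) = 1 := by
    intro l
    induction l with
    | zero => simp
    | succ l ih =>
      rw [hsum_snoc l (fun ω => ∏ j, P (ω j))]
      have h1 : ∀ i : Fin N, ∑ ω : Fin l → Fin N, ∏ j, P ((Fin.snoc ω i : Fin (l+1) → Fin N) j) = P i := by
        intro i
        calc ∑ ω : Fin l → Fin N, ∏ j, P ((Fin.snoc ω i : Fin (l+1) → Fin N) j)
            = ∑ ω : Fin l → Fin N, (∏ j, P (ω j)) * P i :=
              Finset.sum_congr rfl fun ω _ => hprod_snoc l ω i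
          _ = (∑ ω : Fin l → Fin N, ∏ j, P (ω j)) * P i := by rw [Finset.sum_mul]
          _ = P i := by rw [ih, one_mul]
      rw [Finset.sum_congr rfl fun i _ => h1 i, hPsum]
  set Fv : ℕ → ℝ := fun l => ∑ ω : Fin l → Fin N, (∏ j, P (ω j)) * f (X l ω) with hFv
  set Gv : ℕ → ℝ := fun l => ∑ ω : Fin l → Fin N, (∏ j, P (ω j)) *
    (gradv f (X l ω) ⬝ᵥ Z.mulVec (gradv f (X l ω))) with hGv
  have hstep' : ∀ (l : ℕ) (ω : Fin l → Fin N) (i : Fin N),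
      X (l+1) (Fin.snoc ω i) = X l ω - (Zmat A M (S i)).mulVec (gradv f (X l ω)) := by
    intro l ω i
    have h1 : (fun j : Fin l => (Fin.snoc ω i : Fin (l+1) → Fin N) j.castSucc) = ω := by
      funext j; simp
    have h2 : (Fin.snoc ω i : Fin (l+1) → Fin N) (Fin.last l) = i := by simp
    rw [hXstep l (Fin.snoc ω i), h1, h2]
  have hkey : ∀ l : ℕ, Fv (l+1) ≤ Fv l - (1/2) * Gv l := by
    intro l
    have e : Fv (l+1) = ∑ i, ∑ ω : Fin l → Fin N, (((∏ j, P (ω j)) * P i) *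
        f (X l ω - (Zmat A M (S i)).mulVec (gradv f (X l ω)))) := by
      show (∑ ω : Fin (l+1) → Fin N, (∏ j, P (ω j)) * f (X (l+1) ω)) = _
      rw [hsum_snoc l (fun ω => (∏ j, P (ω j)) * f (X (l+1) ω))]
      refine Finset.sum_congr rfl fun i _ => Finset.sum_congr rfl fun ω _ => ?_
      rw [hstep' l ω i, hprod_snoc l ω i]
    have hb : Fv (l+1) ≤ ∑ i, ∑ ω : Fin l → Fin N, (((∏ j, P (ω j)) * P i) *
        (f (X l ω) - (1/2) * (gradv f (X l ω) ⬝ᵥ (Zmat A M (S i)).mulVec (gradv f (X l ω))))) := by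
      rw [e]
      refine Finset.sum_le_sum fun i _ => Finset.sum_le_sum fun ω _ => ?_
      exact mul_le_mul_of_nonneg_left
        (descent_step A b M f hsmooth _ (hZp i).1 (hZp i).2.2 _ (hfeas l ω)).2
        (mul_nonneg (hwt_nonneg ω) (hP i))
    have e2 : (∑ i, ∑ ω : Fin l → Fin N, (((∏ j, P (ω j)) * P i) *
        (f (X l ω) - (1/2) * (gradv f (X l ω) ⬝ᵥ (Zmat A M (S i)).mulVec (gradv f (X l ω))))))
        = Fv l - (1/2) * Gv l := by
      rw [Finset.sum_comm]
      have hpt : ∀ ω : Fin l → Fin N,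
          (∑ i, (((∏ j, P (ω j)) * P i) *
            (f (X l ω) - (1/2) * (gradv f (X l ω) ⬝ᵥ (Zmat A M (S i)).mulVec (gradv f (X l ω))))))
          = (∏ j, P (ω j)) * f (X l ω) - (1/2) * ((∏ j, P (ω j)) *
              (gradv f (X l ω) ⬝ᵥ Z.mulVec (gradv f (X l ω)))) := by
        intro ω
        have hq : ∑ i, P i * (gradv f (X l ω) ⬝ᵥ (Zmat A M (S i)).mulVec (gradv f (X l ω)))
            = gradv f (X l ω) ⬝ᵥ Z.mulVec (gradv f (X l ω)) := by
          rw [hZ]; exact (quad_sum P _ (gradv f (X l ω))).symm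
        calc (∑ i, (((∏ j, P (ω j)) * P i) *
            (f (X l ω) - (1/2) * (gradv f (X l ω) ⬝ᵥ (Zmat A M (S i)).mulVec (gradv f (X l ω))))))
            = ∑ i, ((∏ j, P (ω j)) * (P i * f (X l ω)) - (1/2) * ((∏ j, P (ω j)) *
                (P i * (gradv f (X l ω) ⬝ᵥ (Zmat A M (S i)).mulVec (gradv f (X l ω)))))) :=
              Finset.sum_congr rfl fun i _ => by ring
          _ = (∏ j, P (ω j)) * ((∑ i, P i) * f (X l ω)) - (1/2) * ((∏ j, P (ω j)) *
                (∑ i, P i * (gradv f (X l ω) ⬝ᵥ (Zmat A M (S i)).mulVec (gradv f (X l ω))))) := by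
              rw [Finset.sum_sub_distrib, ← Finset.mul_sum, ← Finset.mul_sum, ← Finset.mul_sum,
                Finset.sum_mul]
          _ = (∏ j, P (ω j)) * f (X l ω) - (1/2) * ((∏ j, P (ω j)) *
                (gradv f (X l ω) ⬝ᵥ Z.mulVec (gradv f (X l ω)))) := by
              rw [hPsum, one_mul, hq]
      rw [Finset.sum_congr rfl fun ω _ => hpt ω, Finset.sum_sub_distrib, ← Finset.mul_sum]
    linarith [hb, le_of_eq e2]
  have htel : ∀ K : ℕ, Fv K + (1/2) * (∑ l ∈ Finset.range K, Gv l) ≤ Fv 0 := by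
    intro K
    induction K with
    | zero => simp
    | succ K ih =>
      rw [Finset.sum_range_succ]
      have := hkey K
      linarith
  have hF0 : Fv 0 = f x0 := by
    show (∑ ω : Fin 0 → Fin N, (∏ j, P (ω j)) * f (X 0 ω)) = f x0
    simp [hX0]
  have hFk : fbar ≤ Fv k := by
    show fbar ≤ ∑ ω : Fin k → Fin N, (∏ j, P (ω j)) * f (X k ω)
    calc fbar = fbar * (∑ ω : Fin k → Fin N, ∏ j, P (ω j)) := by rw [hwt_one, mul_one]
      _ = ∑ ω : Fin k → Fin N, fbar * (∏ j, P (ω j)) := Finset.mul_sum _ _ _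
      _ ≤ ∑ ω : Fin k → Fin N, (∏ j, P (ω j)) * f (X k ω) := by
          refine Finset.sum_le_sum fun ω _ => ?_
          rw [mul_comm]
          exact mul_le_mul_of_nonneg_left (hbd _ (hfeas k ω)) (hwt_nonneg ω)
  have hsumG : ∑ l ∈ Finset.range k, Gv l ≤ 2 * (f x0 - fbar) := by
    have h1 := htel k
    rw [hF0] at h1
    linarith
  obtain ⟨l0, hl0mem, hl0min⟩ :=
    Finset.exists_min_image (Finset.range k) Gv ⟨0, Finset.mem_range.mpr hk⟩
  refine ⟨l0, Finset.mem_range.mp hl0mem, ?_⟩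
  have hGproj : (∑ ω : Fin l0 → Fin N, (∏ j, P (ω j)) *
      (proj (gradv f (X l0 ω)) ⬝ᵥ Z.mulVec (proj (gradv f (X l0 ω))))) = Gv l0 := by
    refine Finset.sum_congr rfl fun ω _ => ?_
    congr 1
    obtain ⟨h1, y, hy⟩ := hproj (gradv f (X l0 ω))
    exact (proj_quad A Z hAZ hZA _ _ h1 y hy).symm
  rw [hGproj]
  have hkpos : (0:ℝ) < (k:ℝ) := by exact_mod_cast hk
  rw [le_div_iff₀ hkpos]
  have hcard : (k:ℝ) * Gv l0 ≤ ∑ l ∈ Finset.range k, Gv l := by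
    calc (k:ℝ) * Gv l0 = ∑ _l ∈ Finset.range k, Gv l0 := by
          rw [Finset.sum_const, Finset.card_range, nsmul_eq_mul]
      _ ≤ ∑ l ∈ Finset.range k, Gv l := Finset.sum_le_sum fun l hl => hl0min l hl
  have hc : Gv l0 * (k:ℝ) = (k:ℝ) * Gv l0 := mul_comm _ _
  linarith
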